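/- Let n ≥ 1 and let A ⊆ ℕ be a crisp set, identified with the fuzzy set whose values lie in {0, 1}. Then A is n-c.e. in the classical sense (there is a computable f : ℕ × ℕ → {0,1} with f(x,0) = 0, lim_{s→∞} f(x,s) = A(x), and |{s : f(x,s) ≠ f(x,s+1)}| ≤ n for all x) if and only if A is fuzzy n-c.e. -/

import Mathlib

open Filter

/-- The Σ-mind-change function of a sequence of rationals: starts at `1`,
flips to `-1` on a strict decrease while in increasing mode, and flips back
to `1` on a strict increase while in decreasing mode. -/
def mSigma (g : ℕ → ℚ) : ℕ → ℤ
  | 0 => 1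
  | s + 1 =>
      if mSigma g s = 1 then (if g s ≤ g (s + 1) then 1 else -1)
      else (if g (s + 1) ≤ g s then -1 else 1)

/-- A fuzzy set: a function `ℕ → ℝ` with values in `[0,1]`. -/
def IsFuzzySet (A : ℕ → ℝ) : Prop := ∀ x, 0 ≤ A x ∧ A x ≤ 1

/-- `f` is a Σ⁰₁-approximation of the fuzzy set `A`. -/
def SigmaApprox (f : ℕ → ℕ → ℚ) (A : ℕ → ℝ) : Prop :=
  Computable₂ f ∧ (∀ x s, 0 ≤ f x s ∧ f x s ≤ 1) ∧
    (∀ x s, f x s ≤ f x (s + 1)) ∧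
    (∀ x, Tendsto (fun s => (f x s : ℝ)) atTop (nhds (A x)))

/-- A fuzzy set is computably enumerable if it has a Σ⁰₁-approximation. -/
def FuzzyCE (A : ℕ → ℝ) : Prop := ∃ f : ℕ → ℕ → ℚ, SigmaApprox f A

/-- `f` is a Δ⁰₂-approximation of the fuzzy set `A`. -/
def DeltaApprox (f : ℕ → ℕ → ℚ) (A : ℕ → ℝ) : Prop :=
  Computable₂ f ∧ (∀ x s, 0 ≤ f x s ∧ f x s ≤ 1) ∧
    (∀ x, Tendsto (fun s => (f x s : ℝ)) atTop (nhds (A x)))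

/-- A fuzzy set `A` is `n`-c.e. if it has a Δ⁰₂-approximation which starts at `0`
and changes monotonicity at most `n - 1` times. -/
def FuzzyNCE (n : ℕ) (A : ℕ → ℝ) : Prop :=
  ∃ f : ℕ → ℕ → ℚ, DeltaApprox f A ∧ (∀ x, f x 0 = 0) ∧
    (∀ x, {s | mSigma (f x) (s + 1) ≠ mSigma (f x) s}.Finite ∧
      {s | mSigma (f x) (s + 1) ≠ mSigma (f x) s}.ncard ≤ n - 1)

/-- A crisp set `A ⊆ ℕ` is classically `n`-c.e.: it has a computable `{0,1}`-valued
approximation starting at `0`, converging to the characteristic function of `A`,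
with at most `n` changes. -/
def ClassicalNCE (n : ℕ) (A : Set ℕ) : Prop :=
  ∃ f : ℕ → ℕ → Bool, Computable₂ f ∧ (∀ x, f x 0 = false) ∧
    (∀ x, ∀ᶠ s in atTop, (f x s = true ↔ x ∈ A)) ∧
    (∀ x, {s | f x s ≠ f x (s + 1)}.Finite ∧ {s | f x s ≠ f x (s + 1)}.ncard ≤ n)

section
open Encodable

namespace FuzzyComb

lemma mSigma_cases (g : ℕ → ℚ) (s : ℕ) : mSigma g s = 1 ∨ mSigma g s = -1 := by
  cases s with
  | zero => left; rfl
  | succ s =>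
    rw [mSigma]
    split <;> split <;> simp

lemma mSigma_of_lt {g : ℕ → ℚ} {s : ℕ} (h : g s < g (s + 1)) : mSigma g (s + 1) = 1 := by
  rw [mSigma]
  rcases mSigma_cases g s with hm | hm <;> simp [hm, le_of_lt h, not_le.2 h]

lemma mSigma_of_gt {g : ℕ → ℚ} {s : ℕ} (h : g (s + 1) < g s) : mSigma g (s + 1) = -1 := by
  rw [mSigma]
  rcases mSigma_cases g s with hm | hm <;> simp [hm, le_of_lt h, not_le.2 h]

lemma mSigma_of_eq {g : ℕ → ℚ} {s : ℕ} (h : g (s + 1) = g s) :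
    mSigma g (s + 1) = mSigma g s := by
  rw [mSigma]
  rcases mSigma_cases g s with hm | hm <;> simp [hm, h]

/-! ### counting -/

def cnt (p : ℕ → Prop) [DecidablePred p] (s : ℕ) : ℕ := ((Finset.range s).filter p).card

lemma cnt_succ (p : ℕ → Prop) [DecidablePred p] (s : ℕ) :
    cnt p (s + 1) = cnt p s + if p s then 1 else 0 := by
  unfold cnt
  rw [Finset.range_add_one, Finset.filter_insert]
  split
  · rw [Finset.card_insert_of_notMem (by simp)]
  · omega

lemma cnt_mono (p : ℕ → Prop) [DecidablePred p] : Monotone (cnt p) :=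
  monotone_nat_of_le_succ fun s => by rw [cnt_succ]; omega

lemma finite_and_ncard {p : ℕ → Prop} [DecidablePred p] {N : ℕ} (h : ∀ s, p s → s < N) :
    {s | p s}.Finite ∧ {s | p s}.ncard = cnt p N := by
  have he : {s | p s} = ↑((Finset.range N).filter p) := by
    ext s
    simp only [Set.mem_setOf_eq, Finset.coe_filter, Finset.mem_range, Set.mem_setOf_eq]
    exact ⟨fun hs => ⟨h s hs, hs⟩, fun hs => hs.2⟩
  rw [he]
  exact ⟨(Finset.filter p (Finset.range N)).finite_toSet, Set.ncard_coe_finset _⟩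

lemma bound_of_finite {p : ℕ → Prop} (h : {s | p s}.Finite) : ∃ N, ∀ s, p s → s < N := by
  obtain ⟨N0, hN0⟩ := h.bddAbove
  exact ⟨N0 + 1, fun s hs => Nat.lt_succ_of_le (hN0 hs)⟩

lemma cnt_le_ncard {p : ℕ → Prop} [DecidablePred p] (h : {s | p s}.Finite) (M : ℕ) :
    cnt p M ≤ {s | p s}.ncard := by
  rw [Set.ncard_eq_toFinset_card _ h]
  apply Finset.card_le_card
  intro a ha
  rw [Set.Finite.mem_toFinset]
  exact (Finset.mem_filter.1 ha).2

lemma finite_ncard_of_cnt_bounded {p : ℕ → Prop} [DecidablePred p] {C : ℕ}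
    (h : ∀ M, cnt p M ≤ C) : {s | p s}.Finite ∧ {s | p s}.ncard ≤ C := by
  have hfin : {s | p s}.Finite := by
    by_contra hinf
    have hinf' : {s | p s}.Infinite := hinf
    obtain ⟨t, hts, htc⟩ := hinf'.exists_subset_card_eq (C + 1)
    have hsub : t ⊆ (Finset.range (t.sup id + 1)).filter p := by
      intro a ha
      rw [Finset.mem_filter, Finset.mem_range]
      exact ⟨Nat.lt_succ_of_le (Finset.le_sup (f := id) ha), hts ha⟩
    have := Finset.card_le_card hsub
    rw [htc] at this
    exact absurd (this.trans (h _)) (by omega)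
  obtain ⟨N, hN⟩ := bound_of_finite hfin
  obtain ⟨-, hcard⟩ := finite_and_ncard hN
  exact ⟨hfin, hcard ▸ h N⟩

/-! ### the potential function -/

def phi (b : ℕ → Bool) (g : ℕ → ℚ) (s : ℕ) : ℕ :=
  if (b s = true ↔ mSigma g s = 1) then 1 else 0

lemma phi_le_one (b : ℕ → Bool) (g : ℕ → ℚ) (s : ℕ) : phi b g s ≤ 1 := by
  unfold phi; split <;> omega

/-- Invariant for the backward direction: changes are bounded by flips plus the potential. -/
lemma chg_le_flp (b : ℕ → Bool) (g : ℕ → ℚ)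
    (Hup : ∀ s, b s = false → b (s + 1) = true → g s < g (s + 1))
    (Hdn : ∀ s, b s = true → b (s + 1) = false → g (s + 1) < g s) :
    ∀ s, cnt (fun t => b t ≠ b (t + 1)) s ≤
      cnt (fun t => mSigma g (t + 1) ≠ mSigma g t) s + phi b g s := by
  intro s
  induction s with
  | zero => simp [cnt]
  | succ s ih =>
    rw [cnt_succ, cnt_succ]
    by_cases hb : b (s + 1) = b s
    · rw [if_neg (by rw [hb]; exact fun h => h rfl)]
      by_cases hm : mSigma g (s + 1) = mSigma g s
      · have hphi : phi b g (s + 1) = phi b g s := by unfold phi; rw [hb, hm]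
        rw [if_neg (by rw [hm]; exact fun h => h rfl), hphi]
        omega
      · rw [if_pos hm]
        have h1 := phi_le_one b g s
        have h2 : phi b g (s + 1) ≥ 0 := Nat.zero_le _
        omega
    · cases hbs : b s with
      | false =>
        have hbs1 : b (s + 1) = true := by
          cases h : b (s + 1)
          · rw [hbs] at hb; exact absurd h hb
          · rfl
        have hm1 : mSigma g (s + 1) = 1 := mSigma_of_lt (Hup s hbs hbs1)
        have hphi1 : phi b g (s + 1) = 1 := by unfold phi; rw [hbs1, hm1]; simp
        rw [if_pos (by simp [hbs, hbs1]), hphi1]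
        rcases mSigma_cases g s with hm | hm
        · have hphi0 : phi b g s = 0 := by unfold phi; rw [hbs, hm]; simp
          rw [hphi0] at ih
          omega
        · have : mSigma g (s + 1) ≠ mSigma g s := by rw [hm1, hm]; decide
          rw [if_pos this]
          have := phi_le_one b g s
          omega
      | true =>
        have hbs1 : b (s + 1) = false := by
          cases h : b (s + 1)
          · rfl
          · rw [hbs] at hb; exact absurd h hb
        have hm1 : mSigma g (s + 1) = -1 := mSigma_of_gt (Hdn s hbs hbs1)
        have hphi1 : phi b g (s + 1) = 1 := by
          unfold phi; rw [hbs1, hm1]; simp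
        rw [if_pos (by simp [hbs, hbs1]), hphi1]
        rcases mSigma_cases g s with hm | hm
        · have : mSigma g (s + 1) ≠ mSigma g s := by rw [hm1, hm]; decide
          rw [if_pos this]
          have := phi_le_one b g s
          omega
        · have hphi0 : phi b g s = 0 := by unfold phi; rw [hbs, hm]; simp
          have hne : ¬(mSigma g (s + 1) ≠ mSigma g s) := by rw [hm1, hm]; exact fun h => h rfl
          rw [if_neg hne]
          rw [hphi0] at ih
          omega

/-- Invariant for the forward direction. -/
lemma flp_le_chg (b : ℕ → Bool) (g : ℕ → ℚ) (hb0 : b 0 = false)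
    (hq : ∀ s, g s = (bif b s then 1 else 0)) :
    ∀ s, cnt (fun t => mSigma g (t + 1) ≠ mSigma g t) s + phi b g s ≤
      cnt (fun t => b t ≠ b (t + 1)) s := by
  have Heq : ∀ s, b (s + 1) = b s → g (s + 1) = g s := fun s h => by rw [hq, hq, h]
  intro s
  induction s with
  | zero =>
    have : phi b g 0 = 0 := by
      unfold phi
      rw [hb0, show mSigma g 0 = 1 from rfl]
      simp
    simp [cnt, this]
  | succ s ih =>
    rw [cnt_succ, cnt_succ]
    by_cases hb : b (s + 1) = b s
    · have hm : mSigma g (s + 1) = mSigma g s := mSigma_of_eq (Heq s hb)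
      have hphi : phi b g (s + 1) = phi b g s := by unfold phi; rw [hb, hm]
      rw [if_neg (show ¬mSigma g (s + 1) ≠ mSigma g s by rw [hm]; exact fun h => h rfl),
        if_neg (show ¬b s ≠ b (s + 1) by rw [hb]; exact fun h => h rfl), hphi]
      omega
    · have hchg : b s ≠ b (s + 1) := fun h => hb h.symm
      cases hbs : b s with
      | false =>
        have hbs1 : b (s + 1) = true := by
          cases h : b (s + 1)
          · rw [hbs] at hb; exact absurd h hb
          · rfl
        have hlt : g s < g (s + 1) := by rw [hq, hq, hbs, hbs1]; norm_num
        have hm1 : mSigma g (s + 1) = 1 := mSigma_of_lt hlt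
        have hphi1 : phi b g (s + 1) = 1 := by unfold phi; rw [hbs1, hm1]; simp
        rw [if_pos (show false ≠ b (s + 1) by rw [hbs1]; decide), hphi1]
        rcases mSigma_cases g s with hm | hm
        · have hphi0 : phi b g s = 0 := by unfold phi; rw [hbs, hm]; simp
          rw [if_neg (show ¬mSigma g (s + 1) ≠ mSigma g s by
            rw [hm1, hm]; exact fun h => h rfl)]
          rw [hphi0] at ih
          omega
        · have hphi0 : phi b g s = 1 := by unfold phi; rw [hbs, hm]; simp
          rw [if_pos (show mSigma g (s + 1) ≠ mSigma g s by rw [hm1, hm]; decide)]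
          rw [hphi0] at ih
          omega
      | true =>
        have hbs1 : b (s + 1) = false := by
          cases h : b (s + 1)
          · rfl
          · rw [hbs] at hb; exact absurd h hb
        have hlt : g (s + 1) < g s := by rw [hq, hq, hbs, hbs1]; norm_num
        have hm1 : mSigma g (s + 1) = -1 := mSigma_of_gt hlt
        have hphi1 : phi b g (s + 1) = 1 := by unfold phi; rw [hbs1, hm1]; simp
        rw [if_pos (show true ≠ b (s + 1) by rw [hbs1]; decide), hphi1]
        rcases mSigma_cases g s with hm | hm
        · have hphi0 : phi b g s = 1 := by unfold phi; rw [hbs, hm]; simp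
          rw [if_pos (show mSigma g (s + 1) ≠ mSigma g s by rw [hm1, hm]; decide)]
          rw [hphi0] at ih
          omega
        · have hphi0 : phi b g s = 0 := by unfold phi; rw [hbs, hm]; simp
          rw [if_neg (show ¬mSigma g (s + 1) ≠ mSigma g s by
            rw [hm1, hm]; exact fun h => h rfl)]
          rw [hphi0] at ih
          omega

/-- After any change the potential is 1 (forward setting). -/
lemma phi_eq_one (b : ℕ → Bool) (g : ℕ → ℚ)
    (hq : ∀ s, g s = (bif b s then 1 else 0)) :
    ∀ s t, t < s → b t ≠ b (t + 1) → phi b g s = 1 := by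
  have Heq : ∀ s, b (s + 1) = b s → g (s + 1) = g s := fun s h => by rw [hq, hq, h]
  intro s
  induction s with
  | zero => omega
  | succ s ih =>
    intro t ht hc
    by_cases hb : b (s + 1) = b s
    · rcases Nat.lt_succ_iff_lt_or_eq.1 ht with h | h
      · have hm : mSigma g (s + 1) = mSigma g s := mSigma_of_eq (Heq s hb)
        have := ih t h hc
        unfold phi at this ⊢
        rw [hb, hm]
        exact this
      · subst h
        exact absurd hb (Ne.symm hc)
    · cases hbs : b s with
      | false =>
        have hbs1 : b (s + 1) = true := by
          cases h : b (s + 1)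
          · rw [hbs] at hb; exact absurd h hb
          · rfl
        have hlt : g s < g (s + 1) := by rw [hq, hq, hbs, hbs1]; norm_num
        have hm1 : mSigma g (s + 1) = 1 := mSigma_of_lt hlt
        unfold phi; rw [hbs1, hm1]; simp
      | true =>
        have hbs1 : b (s + 1) = false := by
          cases h : b (s + 1)
          · rfl
          · rw [hbs] at hb; exact absurd h hb
        have hlt : g (s + 1) < g s := by rw [hq, hq, hbs, hbs1]; norm_num
        have hm1 : mSigma g (s + 1) = -1 := mSigma_of_gt hlt
        unfold phi; rw [hbs1, hm1]; simp

end FuzzyComb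

namespace FuzzyAux

/-! ### gcd is primitive recursive -/

private def gstep : ℕ × ℕ → ℕ × ℕ := fun p => if p.1 = 0 then p else (p.2 % p.1, p.1)

private lemma gstep_iterate : ∀ j m n, m ≤ j → gstep^[j] (m, n) = (0, Nat.gcd m n) := by
  intro j
  induction j using Nat.strong_induction_on with
  | _ j ih =>
    intro m n hm
    cases j with
    | zero =>
      interval_cases m
      simp [Nat.gcd_zero_left]
    | succ j =>
      rw [Function.iterate_succ_apply]
      by_cases h0 : m = 0
      · subst h0
        have : gstep (0, n) = (0, n) := by simp [gstep]
        rw [this, ih j (Nat.lt_succ_self j) 0 n (Nat.zero_le j)]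
      · have : gstep (m, n) = (n % m, m) := by simp [gstep, h0]
        rw [this, ih j (Nat.lt_succ_self j) (n % m) m
          (by have := Nat.mod_lt n (Nat.pos_of_ne_zero h0); omega)]
        rw [Nat.gcd_rec m n]

private lemma primrec_gstep : Primrec gstep :=
  Primrec.ite (Primrec.eq.comp Primrec.fst (Primrec.const 0)) Primrec.id
    ((Primrec.nat_mod.comp Primrec.snd Primrec.fst).pair Primrec.fst)

lemma primrec_gcd : Primrec₂ Nat.gcd := by
  have h : Primrec (fun p : ℕ × ℕ => (gstep^[p.1] p).2) :=
    Primrec.snd.comp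
      (Primrec.nat_iterate Primrec.fst Primrec.id (primrec_gstep.comp₂ Primrec₂.right))
  exact h.of_eq fun p => by rw [gstep_iterate p.1 p.1 p.2 le_rfl]

/-! ### The code-level predicates -/

def memS (k : ℕ) : Bool :=
  decide (0 < k.unpair.2 ∧ Nat.gcd (k.unpair.1 / 2 + k.unpair.1 % 2) k.unpair.2 = 1)

def halfLe (k : ℕ) : Bool := decide (k.unpair.1 % 2 = 0 ∧ k.unpair.2 ≤ k.unpair.1)

/-! ### The rational encoding -/

abbrev encQ : ℚ → ℕ := @encode ℚ Rat.instEncodable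

abbrev SQ : Set ℕ := Set.range encQ

instance : DecidablePred (· ∈ SQ) := decidableRangeEncode ℚ

instance : Infinite ↥SQ :=
  Infinite.of_injective _ (Equiv.ofInjective _ encode_injective).injective

lemma encQ_eq (q : ℚ) : encQ q = Nat.pair (Equiv.intEquivNat q.num) q.den := rfl

lemma intEquivNat_ofNat (m : ℕ) : Equiv.intEquivNat (Int.ofNat m) = 2 * m := rfl
lemma intEquivNat_negSucc (m : ℕ) : Equiv.intEquivNat (Int.negSucc m) = 2 * m + 1 := rfl

lemma natAbs_code (a : ℤ) :
    Equiv.intEquivNat a / 2 + Equiv.intEquivNat a % 2 = a.natAbs := by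
  cases a with
  | ofNat m =>
    have h : (Int.ofNat m).natAbs = m := rfl
    rw [intEquivNat_ofNat, h]; omega
  | negSucc m => rw [intEquivNat_negSucc, Int.natAbs_negSucc]; omega

lemma memS_iff (k : ℕ) : memS k = true ↔ k ∈ SQ := by
  rw [show memS k = decide (0 < k.unpair.2 ∧
      Nat.gcd (k.unpair.1 / 2 + k.unpair.1 % 2) k.unpair.2 = 1) from rfl, decide_eq_true_eq]
  constructor
  · rintro ⟨hj, hg⟩
    set i := k.unpair.1 with hi
    set j := k.unpair.2 with hj'
    set a : ℤ := Equiv.intEquivNat.symm i with ha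
    have hia : Equiv.intEquivNat a = i := Equiv.apply_symm_apply _ _
    have hcop : a.natAbs.Coprime j := by
      unfold Nat.Coprime
      rw [← hia, natAbs_code] at hg
      exact hg
    refine ⟨Rat.mk' a j (by omega) hcop, ?_⟩
    rw [encQ_eq]
    show Nat.pair (Equiv.intEquivNat a) j = k
    rw [hia, hi, hj', Nat.pair_unpair]
  · rintro ⟨q, rfl⟩
    rw [encQ_eq, Nat.unpair_pair]
    refine ⟨Nat.pos_of_ne_zero q.den_nz, ?_⟩
    rw [natAbs_code q.num]
    exact q.reduced

lemma halfLe_iff (q : ℚ) : halfLe (encQ q) = true ↔ (1 / 2 : ℚ) ≤ q := by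
  rw [show halfLe (encQ q) =
      decide ((encQ q).unpair.1 % 2 = 0 ∧ (encQ q).unpair.2 ≤ (encQ q).unpair.1) from rfl]
  rw [encQ_eq, Nat.unpair_pair, decide_eq_true_eq]
  dsimp only
  have hle : (1 / 2 : ℚ) ≤ q ↔ (q.den : ℤ) ≤ 2 * q.num := by
    rw [Rat.le_iff]
    norm_num
    constructor <;> intro h <;> linarith
  rw [hle]
  cases hq : q.num with
  | ofNat m =>
    rw [intEquivNat_ofNat, Int.ofNat_eq_natCast] at *
    constructor
    · rintro ⟨-, h⟩
      omega
    · intro h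
      have h2 : q.den ≤ 2 * m := by exact_mod_cast h
      omega
  | negSucc m =>
    rw [intEquivNat_negSucc]
    constructor
    · rintro ⟨h, -⟩; omega
    · intro h
      exfalso
      have h1 : (0 : ℤ) < q.den := by exact_mod_cast Nat.pos_of_ne_zero q.den_nz
      rw [Int.negSucc_eq] at h
      omega

/-! ### psi -/

def psi (m : ℕ) : ℕ := ↑(Nat.Subtype.ofNat SQ m)

lemma psi_mem (m : ℕ) : memS (psi m) = true :=
  (memS_iff _).2 (Nat.Subtype.ofNat SQ m).2

lemma psi_lt_succ (m : ℕ) : psi m < psi (m + 1) := by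
  have h : Nat.Subtype.ofNat SQ m < Nat.Subtype.ofNat SQ (m + 1) :=
    Nat.Subtype.lt_succ_self _
  exact_mod_cast h

lemma psi_strictMono : StrictMono psi := strictMono_nat_of_lt_succ psi_lt_succ

lemma psi_surj {k : ℕ} (hk : k ∈ SQ) : ∃ m, psi m = k := by
  obtain ⟨m, hm⟩ := Nat.Subtype.ofNat_surjective (s := SQ) ⟨k, hk⟩
  exact ⟨m, congrArg Subtype.val hm⟩

lemma psi_zero_le {k : ℕ} (hk : k ∈ SQ) : psi 0 ≤ k := by
  have h : (Nat.Subtype.ofNat SQ 0) ≤ ⟨k, hk⟩ := by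
    show (⊥ : ↥SQ) ≤ _
    exact bot_le
  exact_mod_cast h


def cntS : ℕ → ℕ
  | 0 => 0
  | k + 1 => cntS k + (bif memS k then 1 else 0)

lemma cntS_mono : Monotone cntS :=
  monotone_nat_of_le_succ fun k => by rw [cntS]; omega

lemma cntS_eq_zero {k : ℕ} (h : ∀ t < k, memS t = false) : cntS k = 0 := by
  induction k with
  | zero => rfl
  | succ k ih =>
    rw [cntS, ih fun t ht => h t (by omega), h k (by omega)]
    rfl

lemma psi_between {m t : ℕ} (h1 : psi m < t) (h2 : t < psi (m + 1)) : memS t = false := by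
  by_contra h
  rw [Bool.not_eq_false, memS_iff] at h
  obtain ⟨j, rfl⟩ := psi_surj h
  have hj1 : j < m + 1 := psi_strictMono.lt_iff_lt.1 h2
  have hj2 : m < j := psi_strictMono.lt_iff_lt.1 h1
  omega

lemma cnt_psi : ∀ m, cntS (psi m) = m := by
  intro m
  induction m with
  | zero =>
    apply cntS_eq_zero
    intro t ht
    by_contra h
    rw [Bool.not_eq_false, memS_iff] at h
    exact absurd (psi_zero_le h) (by omega)
  | succ m ih =>
    have step : ∀ t, psi m < t → t ≤ psi (m + 1) → cntS t = m + 1 := by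
      intro t
      induction t with
      | zero => omega
      | succ t iht =>
        intro h1 h2
        rcases Nat.lt_or_ge (psi m) t with h3 | h3
        · rw [cntS, iht h3 (by omega), psi_between h3 (by omega)]
          rfl
        · have ht : t = psi m := by omega
          rw [cntS, ht, ih, psi_mem]
          rfl
    exact step _ (psi_lt_succ m) le_rfl

lemma psi_least {m k : ℕ} (hk : k < psi m) : ¬(memS k = true ∧ cntS k = m) := by
  rintro ⟨h1, h2⟩
  rw [memS_iff] at h1
  obtain ⟨j, rfl⟩ := psi_surj h1
  have : j < m := psi_strictMono.lt_iff_lt.1 hk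
  rw [cnt_psi] at h2
  omega


/-! ### Computability of the half test on ℚ -/


lemma primrec_memS : Primrec memS := by
  have h1 : PrimrecPred fun k : ℕ => 0 < k.unpair.2 :=
    Primrec.nat_lt.comp (Primrec.const 0) (Primrec.snd.comp Primrec.unpair)
  have h2 : PrimrecPred fun k : ℕ =>
      Nat.gcd (k.unpair.1 / 2 + k.unpair.1 % 2) k.unpair.2 = 1 :=
    Primrec.eq.comp
      (primrec_gcd.comp
        (Primrec.nat_add.comp
          (Primrec.nat_div.comp (Primrec.fst.comp Primrec.unpair) (Primrec.const 2))
          (Primrec.nat_mod.comp (Primrec.fst.comp Primrec.unpair) (Primrec.const 2)))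
        (Primrec.snd.comp Primrec.unpair))
      (Primrec.const 1)
  exact (h1.and h2).decide

lemma primrec_halfLe : Primrec halfLe := by
  have h1 : PrimrecPred fun k : ℕ => k.unpair.1 % 2 = 0 :=
    Primrec.eq.comp (Primrec.nat_mod.comp (Primrec.fst.comp Primrec.unpair) (Primrec.const 2))
      (Primrec.const 0)
  have h2 : PrimrecPred fun k : ℕ => k.unpair.2 ≤ k.unpair.1 :=
    Primrec.nat_le.comp (Primrec.snd.comp Primrec.unpair) (Primrec.fst.comp Primrec.unpair)
  exact (h1.and h2).decide

lemma primrec_cntS : Primrec cntS := by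
  have h : Primrec (fun k : ℕ =>
      Nat.rec (motive := fun _ => ℕ) 0 (fun t acc => acc + (bif memS t then 1 else 0)) k) :=
    Primrec.nat_rec₁ 0
      (Primrec.nat_add.comp Primrec.snd
        (Primrec.cond (primrec_memS.comp Primrec.fst) (Primrec.const 1) (Primrec.const 0)))
  exact h.of_eq fun k => by induction k with
    | zero => rfl
    | succ k ih => simp [cntS, ih]



lemma computable_psi : Computable psi := by
  have hp : Computable₂ fun (m k : ℕ) => memS k && (cntS k == m) := by
    apply Primrec₂.to_comp
    exact Primrec.and.comp₂
      ((primrec_memS.comp Primrec.snd).to₂ : Primrec₂ fun (m k : ℕ) => memS k)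
      (Primrec.beq.comp₂
        ((primrec_cntS.comp Primrec.snd).to₂)
        (Primrec.fst.to₂))
  have hrf : Partrec fun m : ℕ =>
      Nat.rfind fun k => (memS k && (cntS k == m) : Part Bool) :=
    Partrec.rfind hp.partrec₂
  apply Partrec.of_eq_tot hrf
  intro m
  apply Nat.mem_rfind.2
  constructor
  · exact Part.mem_some_iff.2 (by rw [psi_mem, cnt_psi]; simp)
  · intro k hk
    apply Part.mem_some_iff.2
    symm
    have := psi_least hk
    rw [Bool.and_eq_false_iff]
    by_cases h1 : memS k = true
    · right
      rw [beq_eq_false_iff_ne]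
      intro h2
      exact this ⟨h1, h2⟩
    · left
      exact Bool.not_eq_true _ ▸ (Bool.eq_false_iff.2 (fun h => h1 h))


lemma encQ_ofNat (m : ℕ) : encQ (Denumerable.ofNat ℚ m) = psi m := by
  have h := (equivRangeEncode ℚ).apply_symm_apply (Nat.Subtype.ofNat SQ m)
  have h2 := congrArg Subtype.val h
  exact h2

lemma psi_encodeP (q : ℚ) :
    psi (@Encodable.encode ℚ Primcodable.toEncodable q) = encQ q := by
  have h2 := @Denumerable.ofNat_encode ℚ _ q
  calc psi (@Encodable.encode ℚ Primcodable.toEncodable q)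
      = encQ (Denumerable.ofNat ℚ (@Encodable.encode ℚ Primcodable.toEncodable q)) :=
        (encQ_ofNat _).symm
    _ = encQ q := by rw [show (@Encodable.encode ℚ Primcodable.toEncodable q)
          = @Encodable.encode ℚ (Denumerable.toEncodable) q from rfl, h2]

lemma computable_ratHalf : Computable (fun q : ℚ => halfLe (encQ q)) := by
  have h : Computable (fun q : ℚ => halfLe (psi (@Encodable.encode ℚ Primcodable.toEncodable q))) :=
    primrec_halfLe.to_comp.comp (computable_psi.comp Computable.encode)
  exact h.of_eq fun q => by rw [psi_encodeP]



end FuzzyAux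


end

open FuzzyComb FuzzyAux

/-- A crisp set is classically `n`-c.e. iff (identified with the fuzzy set given by
its indicator function) it is fuzzy `n`-c.e. -/
theorem crisp_classical_nce_iff_fuzzy_nce (n : ℕ) (hn : 1 ≤ n) (A : Set ℕ) :
    ClassicalNCE n A ↔ FuzzyNCE n (A.indicator fun _ => (1 : ℝ)) := by
  constructor
  · rintro ⟨f, hcomp, h0, hlim, hcnt⟩
    refine ⟨fun x s => bif f x s then 1 else 0, ⟨?_, ?_, ?_⟩, ?_, ?_⟩
    · exact Computable.cond hcomp (Computable.const 1) (Computable.const 0)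
    · intro x s
      cases h : f x s <;> simp [h]
    · intro x
      by_cases hx : x ∈ A
      · rw [Set.indicator_of_mem hx]
        apply tendsto_const_nhds.congr'
        filter_upwards [hlim x] with s hs
        rw [hs.2 hx]
        norm_num
      · rw [Set.indicator_of_notMem hx]
        apply tendsto_const_nhds.congr'
        filter_upwards [hlim x] with s hs
        have : f x s = false := by
          cases h : f x s
          · rfl
          · exact absurd (hs.1 h) hx
        rw [this]
        norm_num
    · intro x
      show (bif f x 0 then (1 : ℚ) else 0) = 0
      rw [h0 x]
      rfl
    · intro x
      obtain ⟨hfin, hcard⟩ := hcnt x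
      obtain ⟨N, hN⟩ := bound_of_finite hfin
      set g : ℕ → ℚ := fun s => bif f x s then 1 else 0 with hg
      have hq : ∀ s, g s = bif f x s then 1 else 0 := fun s => rfl
      have hflip_bound : ∀ s, (mSigma g (s + 1) ≠ mSigma g s) → s < N := by
        intro s hs
        by_contra hge
        have hb : f x s = f x (s + 1) := by
          by_contra hne
          exact hge (hN s hne)
        exact hs (mSigma_of_eq (by rw [hq, hq, hb]))
      obtain ⟨hfin2, hcard2⟩ := finite_and_ncard hflip_bound
      refine ⟨hfin2, ?_⟩
      rw [hcard2]
      have hinv := flp_le_chg (f x) g (h0 x) hq N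
      have hchg_le : cnt (fun t => f x t ≠ f x (t + 1)) N ≤ n :=
        (cnt_le_ncard hfin N).trans hcard
      rcases Nat.eq_zero_or_pos (cnt (fun t => f x t ≠ f x (t + 1)) N) with hz | hpos
      · rw [hz] at hinv
        omega
      · obtain ⟨t, ht⟩ := Finset.card_pos.1 hpos
        rw [Finset.mem_filter, Finset.mem_range] at ht
        have hphi := phi_eq_one (f x) g hq N t ht.1 ht.2
        rw [hphi] at hinv
        omega
  · rintro ⟨f, ⟨hcomp, hbd, hlim⟩, h0, hcnt⟩
    have hbiff : ∀ (q : ℚ), halfLe (encQ q) = true ↔ (1 / 2 : ℚ) ≤ q := halfLe_iff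
    refine ⟨fun x s => halfLe (encQ (f x s)), ?_, ?_, ?_, ?_⟩
    · exact computable_ratHalf.comp hcomp
    · intro x
      show halfLe (encQ (f x 0)) = false
      rw [h0 x]
      cases hb2 : halfLe (encQ (0 : ℚ))
      · rfl
      · exact absurd ((hbiff 0).1 hb2) (by norm_num)
    · intro x
      by_cases hx : x ∈ A
      · have h1 : Filter.Tendsto (fun s => (f x s : ℝ)) Filter.atTop (nhds 1) := by
          have := hlim x
          rwa [Set.indicator_of_mem hx] at this
        filter_upwards [h1.eventually (eventually_gt_nhds (by norm_num : (1 / 2 : ℝ) < 1))]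
          with s hs
        have hles : (1 / 2 : ℚ) ≤ f x s := by
          have h' : ((1 / 2 : ℚ) : ℝ) ≤ ((f x s : ℚ) : ℝ) := by push_cast; linarith
          exact_mod_cast h'
        simp [(hbiff _).2 hles, hx]
      · have h1 : Filter.Tendsto (fun s => (f x s : ℝ)) Filter.atTop (nhds 0) := by
          have := hlim x
          rwa [Set.indicator_of_notMem hx] at this
        filter_upwards [h1.eventually (eventually_lt_nhds (by norm_num : (0 : ℝ) < 1 / 2))]
          with s hs
        have hnot : ¬((1 / 2 : ℚ) ≤ f x s) := by
          intro hle
          have : ((1 : ℚ) / 2 : ℝ) ≤ (f x s : ℝ) := by exact_mod_cast hle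
          rw [show ((1 : ℚ) / 2 : ℝ) = (1 / 2 : ℝ) by norm_num] at this
          linarith
        constructor
        · intro hb2
          exact absurd ((hbiff _).1 hb2) hnot
        · intro hmem
          exact absurd hmem hx
    · intro x
      obtain ⟨hfin, hcard⟩ := hcnt x
      have Hup : ∀ s, halfLe (encQ (f x s)) = false → halfLe (encQ (f x (s + 1))) = true →
          f x s < f x (s + 1) := by
        intro s hs hs1
        have h1 : ¬((1 / 2 : ℚ) ≤ f x s) := by
          intro h
          rw [(hbiff _).2 h] at hs
          exact absurd hs (by decide)
        have h2 : (1 / 2 : ℚ) ≤ f x (s + 1) := (hbiff _).1 hs1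
        exact lt_of_lt_of_le (not_le.1 h1) h2
      have Hdn : ∀ s, halfLe (encQ (f x s)) = true → halfLe (encQ (f x (s + 1))) = false →
          f x (s + 1) < f x s := by
        intro s hs hs1
        have h1 : (1 / 2 : ℚ) ≤ f x s := (hbiff _).1 hs
        have h2 : ¬((1 / 2 : ℚ) ≤ f x (s + 1)) := by
          intro h
          rw [(hbiff _).2 h] at hs1
          exact absurd hs1 (by decide)
        exact lt_of_lt_of_le (not_le.1 h2) h1
      have hbnd : ∀ M, cnt (fun t => halfLe (encQ (f x t)) ≠ halfLe (encQ (f x (t + 1)))) M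
          ≤ n := by
        intro M
        have hinv : cnt (fun t => halfLe (encQ (f x t)) ≠ halfLe (encQ (f x (t + 1)))) M ≤
            cnt (fun t => mSigma (f x) (t + 1) ≠ mSigma (f x) t) M +
              phi (fun s => halfLe (encQ (f x s))) (f x) M :=
          chg_le_flp (fun s => halfLe (encQ (f x s))) (f x) Hup Hdn M
        have h1 : cnt (fun t => mSigma (f x) (t + 1) ≠ mSigma (f x) t) M ≤ n - 1 :=
          (cnt_le_ncard hfin M).trans hcard
        have h2 := phi_le_one (fun s => halfLe (encQ (f x s))) (f x) M
        omega
      exact finite_ncard_of_cnt_bounded hbnd
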